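/- Let p be a prime and j ≥ 2. Then there exist ℓ ≥ 2 and positive natural numbers j_1, ..., j_ℓ with j_1 + ... + j_ℓ = j such that v_p(j!) − (v_p(j_1!) + ... + v_p(j_ℓ!)) ≤ 1. -/

import Mathlib

open Nat

lemma aux_choose_val (p : ℕ) (hp : p.Prime) (j : ℕ) (hj : 2 ≤ j) :
    ∃ a, 0 < a ∧ a < j ∧ padicValNat p (j.choose a) ≤ 1 := by
  set k := Nat.log p j with hk
  by_cases hpk : j = p ^ k
  · -- j = p^k, k ≥ 1; take a = p^(k-1)
    have hk1 : 1 ≤ k := by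
      by_contra h
      push_neg at h
      interval_cases k
      · simp at hpk; omega
    have hlt : p ^ (k - 1) < p ^ k :=
      Nat.pow_lt_pow_right hp.one_lt (by omega)
    have hle : p ^ (k - 1) ≤ p ^ k := hlt.le
    have hne : (p : ℕ) ^ (k - 1) ≠ 0 := (Nat.pow_pos hp.pos).ne'
    have h := Nat.Prime.emultiplicity_choose_prime_pow hp hle hne
    have hmul : multiplicity p (p ^ (k - 1)) = k - 1 :=
      multiplicity_pow_self_of_prime hp.prime (k - 1)
    rw [hmul] at h
    have hkk : k - (k - 1) = 1 := by omega
    rw [hkk] at h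
    have hmul2 : multiplicity p ((p ^ k).choose (p ^ (k - 1))) = 1 :=
      multiplicity_eq_of_emultiplicity_eq_some (by exact_mod_cast h)
    have hC : (p ^ k).choose (p ^ (k - 1)) ≠ 0 := (Nat.choose_pos hle).ne'
    refine ⟨p ^ (k - 1), Nat.pow_pos hp.pos, by rw [hpk]; exact hlt, ?_⟩
    rw [hpk, ← Nat.factorization_def _ hp, ← Nat.multiplicity_eq_factorization hp hC, hmul2]
  · -- take a = p^k
    refine ⟨p ^ k, Nat.pow_pos hp.pos, ?_, ?_⟩
    · have := Nat.pow_log_le_self p (by omega : j ≠ 0)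
      exact lt_of_le_of_ne this (fun h => hpk h.symm)
    · have hkn : p ^ k ≤ j := Nat.pow_log_le_self p (by omega : j ≠ 0)
      have hnb : Nat.log p j < k + 1 := by omega
      have h := Nat.Prime.emultiplicity_choose hp hkn hnb
      have hempty : {i ∈ Finset.Ico 1 (k + 1) |
          p ^ i ≤ p ^ k % p ^ i + (j - p ^ k) % p ^ i} = ∅ := by
        apply Finset.filter_false_of_mem
        intro i hi
        simp only [Finset.mem_Ico] at hi
        have hdvd : p ^ i ∣ p ^ k := pow_dvd_pow p (by omega)
        have h1 : p ^ k % p ^ i = 0 := Nat.mod_eq_zero_of_dvd hdvd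
        have h2 : (j - p ^ k) % p ^ i < p ^ i := Nat.mod_lt _ (Nat.pow_pos hp.pos)
        omega
      rw [hempty] at h
      simp only [Finset.card_empty, Nat.cast_zero] at h
      have hC : j.choose (p ^ k) ≠ 0 := (Nat.choose_pos hkn).ne'
      have hmul2 : multiplicity p (j.choose (p ^ k)) = 0 :=
        multiplicity_eq_of_emultiplicity_eq_some (by exact_mod_cast h)
      rw [← Nat.factorization_def _ hp, ← Nat.multiplicity_eq_factorization hp hC, hmul2]
      omega

set_option maxHeartbeats 800000 in
/-- For a prime `p` and `j ≥ 2`, there exist `ℓ ≥ 2` and positive natural numbers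
`j_1, ..., j_ℓ` summing to `j` such that
`v_p(j!) − (v_p(j_1!) + ... + v_p(j_ℓ!)) ≤ 1`. -/
theorem exists_young_subgroup_small_index_valuation
    (p : ℕ) (hp : p.Prime) (j : ℕ) (hj : 2 ≤ j) :
    ∃ (ℓ : ℕ) (f : Fin ℓ → ℕ), 2 ≤ ℓ ∧ (∀ i, 0 < f i) ∧ (∑ i, f i = j) ∧
      padicValNat p (Nat.factorial j)
        - ∑ i, padicValNat p (Nat.factorial (f i)) ≤ 1 := by
  haveI := Fact.mk hp
  obtain ⟨a, ha0, haj, hval⟩ := aux_choose_val p hp j hj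
  refine ⟨2, ![a, j - a], le_refl 2, ?_, ?_, ?_⟩
  · intro i; fin_cases i <;> simp <;> omega
  · simp [Fin.sum_univ_two]; omega
  · rw [Fin.sum_univ_two]
    simp only [Matrix.cons_val_zero, Matrix.cons_val_one, Matrix.head_cons]
    have key : padicValNat p j.factorial =
        padicValNat p (j.choose a) + (padicValNat p a.factorial +
          padicValNat p (j - a).factorial) := by
      have h1 : j.choose a * a.factorial * (j - a).factorial = j.factorial :=
        Nat.choose_mul_factorial_mul_factorial haj.le
      have hc : j.choose a ≠ 0 := (Nat.choose_pos haj.le).ne'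
      rw [← h1, padicValNat.mul (by positivity) (Nat.factorial_pos _).ne',
        padicValNat.mul hc (Nat.factorial_pos _).ne']
      ring
    omega
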